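/- Let G be a group and K a field of characteristic 0 with algebraic closure K̄. Let ρ : G → GL_n(K̄) be a semisimple representation. Assume: (i) ρ is defined over some finite extension of K inside K̄; (ii) Tr ρ(g) ∈ K for every g ∈ G; (iii) there exists g₀ ∈ G such that the characteristic polynomial of ρ(g₀) has n distinct roots, all lying in K. Then ρ itself is defined over K. -/

import Mathlib

open Matrix Polynomial

/-- A matrix representation `ρ : G → GLₙ(F)` is *defined over* a subfield `E ⊆ F` if some
single conjugate of it has all matrix entries in `E`. -/
def MatRep.IsDefinedOver {G : Type*} [Group G] {F : Type*} [Field F] {ι : Type*}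
    [Fintype ι] [DecidableEq ι]
    (ρ : G →* Matrix.GeneralLinearGroup ι F) (E : Subfield F) : Prop :=
  ∃ M : Matrix.GeneralLinearGroup ι F,
    ∀ (g : G) (i j : ι),
      ((M * ρ g * M⁻¹ : Matrix.GeneralLinearGroup ι F) : Matrix ι ι F) i j ∈ E

/-- A matrix representation is *irreducible* if the underlying space is nonzero and the only
`G`-invariant subspaces (for the `mulVec` action) are `⊥` and `⊤`. -/
def MatRep.IsIrreducible {G : Type*} [Group G] {F : Type*} [Field F] {ι : Type*}
    [Fintype ι] [DecidableEq ι]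
    (ρ : G →* Matrix.GeneralLinearGroup ι F) : Prop :=
  Nonempty ι ∧
    ∀ p : Submodule F (ι → F),
      (∀ g : G, ∀ v ∈ p, ((ρ g : Matrix ι ι F)).mulVec v ∈ p) → p = ⊥ ∨ p = ⊤


lemma exists_diag {F : Type*} [Field F] {n : ℕ} (hn : 0 < n) (A : Matrix (Fin n) (Fin n) F)
    (lam : Fin n → F) (hinj : Function.Injective lam)
    (hA : A.charpoly = ∏ i, (X - C (lam i))) :
    ∃ P : (Matrix (Fin n) (Fin n) F)ˣ,
      (↑P⁻¹ : Matrix (Fin n) (Fin n) F) * A * (↑P : Matrix (Fin n) (Fin n) F)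
        = Matrix.diagonal lam := by
  classical
  have hdet : ∀ i, (Matrix.scalar (Fin n) (lam i) - A).det = 0 := by
    intro i
    have h1 : (A.charpoly).eval (lam i) = (Matrix.scalar (Fin n) (lam i) - A).det := by
      rw [Matrix.charpoly, eval_det, matPolyEquiv_charmatrix, eval_sub, eval_X, eval_C]
    rw [← h1, hA, eval_prod]
    exact Finset.prod_eq_zero (Finset.mem_univ i) (by simp)
  have hv : ∀ i, ∃ v : Fin n → F, v ≠ 0 ∧ A.mulVec v = lam i • v := by
    intro i
    obtain ⟨v, hv0, hv⟩ := (Matrix.exists_mulVec_eq_zero_iff).2 (hdet i)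
    refine ⟨v, hv0, ?_⟩
    have h3 := Matrix.sub_mulVec (Matrix.scalar (Fin n) (lam i)) A v
    rw [hv] at h3
    have h2 : (Matrix.scalar (Fin n) (lam i)).mulVec v = lam i • v := by
      ext k
      simp [Matrix.scalar, Matrix.mulVec_diagonal]
    have h4 := sub_eq_zero.mp h3.symm
    rw [h2] at h4
    exact h4.symm
  choose v hv0 hveq using hv
  have heig : ∀ i, Module.End.HasEigenvector (Matrix.mulVecLin A) (lam i) (v i) := by
    intro i
    constructor
    · rw [Module.End.mem_eigenspace_iff]
      simpa using hveq i
    · exact hv0 i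
  have hli : LinearIndependent F v :=
    Module.End.eigenvectors_linearIndependent' _ lam hinj v heig
  haveI : Nonempty (Fin n) := ⟨⟨0, hn⟩⟩
  have hcard : Fintype.card (Fin n) = Module.finrank F (Fin n → F) := by
    simp [Module.finrank_pi]
  let b := basisOfLinearIndependentOfCardEqFinrank hli hcard
  have hb : ⇑b = v := coe_basisOfLinearIndependentOfCardEqFinrank hli hcard
  let P : Matrix (Fin n) (Fin n) F := (Pi.basisFun F (Fin n)).toMatrix ⇑b
  haveI : Invertible P := (Pi.basisFun F (Fin n)).invertibleToMatrix b
  refine ⟨unitOfInvertible P, ?_⟩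
  have key : A * P = P * Matrix.diagonal lam := by
    ext i j
    have hPij : ∀ i j, P i j = v j i := by
      intro i j
      simp [P, Module.Basis.toMatrix_apply, hb]
    rw [Matrix.mul_apply, Matrix.mul_diagonal]
    have h5 : ∑ k, A i k * P k j = A.mulVec (v j) i := by
      rw [Matrix.mulVec]
      simp [dotProduct, hPij]
    rw [h5, hveq j, hPij, Pi.smul_apply, smul_eq_mul, mul_comm]
  have h6 : (↑(unitOfInvertible P)⁻¹ : Matrix (Fin n) (Fin n) F) = ⅟P := rfl
  rw [h6]
  show ⅟P * A * P = Matrix.diagonal lam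
  rw [mul_assoc, key, ← mul_assoc, invOf_mul_self, one_mul]

section Chain
variable {F : Type*} [Field F] {n : ℕ} {G : Type*}

/-- chains of nonvanishing matrix coefficients -/
inductive MCChain (u : G → Matrix (Fin n) (Fin n) F) : Fin n → Fin n → F → Prop
  | base (i : Fin n) : MCChain u i i 1
  | step {i j : Fin n} {c : F} (hc : MCChain u i j c) (g : G) (k : Fin n)
      (h : u g j k ≠ 0) : MCChain u i k (c * u g j k)

lemma MCChain.ne_zero {u : G → Matrix (Fin n) (Fin n) F} {i j c}
    (h : MCChain u i j c) : c ≠ 0 := by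
  induction h with
  | base => exact one_ne_zero
  | step hc g k h ih => exact mul_ne_zero ih h

lemma MCChain.trans {u : G → Matrix (Fin n) (Fin n) F} {i j k c d}
    (h1 : MCChain u i j c) (h2 : MCChain u j k d) : MCChain u i k (c * d) := by
  induction h2 with
  | base => simpa using h1
  | step hc g k' hne ih =>
      rw [← mul_assoc]
      exact ih.step g k' hne

lemma MCChain.reverse {u : G → Matrix (Fin n) (Fin n) F}
    (hsymm : ∀ i j, (∃ g, u g i j ≠ 0) → ∃ g, u g j i ≠ 0) {i j c}
    (h : MCChain u i j c) : ∃ c', MCChain u j i c' := by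
  induction h with
  | base => exact ⟨1, MCChain.base i⟩
  | @step j c hc g k hne ih =>
      obtain ⟨c', hc'⟩ := ih
      obtain ⟨h', hh'⟩ := hsymm j k ⟨g, hne⟩
      exact ⟨1 * u h' k j * c', ((MCChain.base k).step h' j hh').trans hc'⟩
end Chain

section Engine
variable (F : Type*) [Field F] {n : ℕ}

-- the diagonal idempotent
noncomputable def Ediag (i : Fin n) : Matrix (Fin n) (Fin n) F :=
  Matrix.diagonal (fun j => if j = i then 1 else 0)

variable {F}

lemma Ediag_mul (i : Fin n) (w : Matrix (Fin n) (Fin n) F) (a b : Fin n) :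
    (Ediag F i * w) a b = if a = i then w a b else 0 := by
  simp [Ediag, Matrix.diagonal_mul, ite_mul]

lemma mul_Ediag (j : Fin n) (w : Matrix (Fin n) (Fin n) F) (a b : Fin n) :
    (w * Ediag F j) a b = if b = j then w a b else 0 := by
  simp [Ediag, Matrix.mul_diagonal, mul_ite]

lemma trace_Ediag_mul_mul_Ediag_mul (i j : Fin n) (w w' : Matrix (Fin n) (Fin n) F) :
    (Ediag F i * w * (Ediag F j * w')).trace = w i j * w' j i := by
  have h1 : ∀ a b, (Ediag F i * w * (Ediag F j * w')) a b
      = if a = i then (w * (Ediag F j * w')) a b else 0 := by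
    intro a b
    rw [mul_assoc]
    exact Ediag_mul i _ a b
  have h2 : (w * (Ediag F j * w')) i i = w i j * w' j i := by
    rw [Matrix.mul_apply]
    rw [Finset.sum_eq_single j]
    · rw [Ediag_mul]; simp
    · intro b _ hb
      rw [Ediag_mul]
      simp [hb]
    · simp
  rw [Matrix.trace]
  rw [Finset.sum_eq_single i]
  · rw [Matrix.diag_apply, h1, if_pos rfl, h2]
  · intro b _ hb
    rw [Matrix.diag_apply, h1, if_neg hb]
  · simp
end Engine

section Span
variable {K F : Type*} [Field K] [Field F] [Algebra K F] {n : ℕ} {G : Type*}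

lemma trace_mem_of_mem_span {u : G → Matrix (Fin n) (Fin n) F}
    (htr : ∀ g, (u g).trace ∈ (algebraMap K F).fieldRange) :
    ∀ x ∈ Submodule.span K (Set.range u), x.trace ∈ (algebraMap K F).fieldRange := by
  intro x hx
  induction hx using Submodule.span_induction with
  | mem x hx => obtain ⟨g, rfl⟩ := hx; exact htr g
  | zero => simp
  | add x y _ _ hx hy => rw [Matrix.trace_add]; exact add_mem hx hy
  | smul k x _ hx =>
      rw [Matrix.trace_smul]
      obtain ⟨k', hk'⟩ := hx
      exact ⟨k * k', by rw [_root_.map_mul, hk', Algebra.smul_def]⟩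

lemma mul_mem_span [Mul G] {u : G → Matrix (Fin n) (Fin n) F}
    (hmul : ∀ g h, u g * u h = u (g * h)) :
    ∀ x ∈ Submodule.span K (Set.range u), ∀ y ∈ Submodule.span K (Set.range u),
      x * y ∈ Submodule.span K (Set.range u) := by
  intro x hx
  induction hx using Submodule.span_induction with
  | mem x hx =>
      intro y hy
      induction hy using Submodule.span_induction with
      | mem y hy =>
          obtain ⟨g, rfl⟩ := hx; obtain ⟨h, rfl⟩ := hy
          rw [hmul]
          exact Submodule.subset_span ⟨g * h, rfl⟩
      | zero => rw [mul_zero]; exact zero_mem _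
      | add y z _ _ hy hz => rw [mul_add]; exact add_mem hy hz
      | smul k y _ hy => rw [mul_smul_comm]; exact Submodule.smul_mem _ _ hy
  | zero => intro y hy; rw [zero_mul]; exact zero_mem _
  | add x z _ _ hx hz => intro y hy; rw [add_mul]; exact add_mem (hx y hy) (hz y hy)
  | smul k x _ hx =>
      intro y hy
      rw [smul_mul_assoc]
      exact Submodule.smul_mem _ _ (hx y hy)

lemma aeval_mem_span {u : G → Matrix (Fin n) (Fin n) F} {A : Matrix (Fin n) (Fin n) F}
    (hpow : ∀ k : ℕ, A ^ k ∈ Set.range u) (p : K[X]) :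
    aeval A p ∈ Submodule.span K (Set.range u) := by
  rw [Polynomial.aeval_eq_sum_range]
  exact Submodule.sum_mem _ fun k _ =>
    Submodule.smul_mem _ _ (Submodule.subset_span (hpow k))

lemma Ediag_eq_aeval {lam' : Fin n → K} (hinj : Function.Injective lam') (i : Fin n) :
    Ediag F i =
      aeval (Matrix.diagonal (fun j => algebraMap K F (lam' j)))
        (Lagrange.basis Finset.univ lam' i) := by
  classical
  set p := Lagrange.basis Finset.univ lam' i with hp
  have h1 : aeval (Matrix.diagonal (fun j => algebraMap K F (lam' j))) p
      = Matrix.diagonal (aeval (fun j => algebraMap K F (lam' j)) p) := by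
    have := aeval_algHom_apply (Matrix.diagonalAlgHom (n := Fin n) (α := F) K)
      (fun j => algebraMap K F (lam' j)) p
    simpa using this
  rw [h1]
  unfold Ediag
  refine congrArg Matrix.diagonal (funext fun j => ?_)
  have h2 : (aeval (fun j => algebraMap K F (lam' j)) p) j
      = aeval (algebraMap K F (lam' j)) p := by
    have := aeval_algHom_apply (Pi.evalAlgHom K (fun _ : Fin n => F) j)
      (fun j => algebraMap K F (lam' j)) p
    simp at this
    rw [this]
  rw [h2, aeval_algebraMap_apply_eq_algebraMap_eval]
  by_cases hji : j = i
  · subst hji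
    rw [if_pos rfl, hp, Lagrange.eval_basis_self (Set.injOn_of_injective hinj) (Finset.mem_univ j)]
    simp
  · rw [if_neg hji, hp, Lagrange.eval_basis_of_ne (fun h => hji h.symm) (Finset.mem_univ j)]
    simp
end Span

section EngineMain
variable {K F : Type*} [Field K] [Field F] [Algebra K F] {n : ℕ} {G : Type*} [Group G]

set_option maxHeartbeats 1000000 in
lemma engine (σ : G →* (Matrix (Fin n) (Fin n) F)ˣ)
    (htr : ∀ g, ((σ g : Matrix (Fin n) (Fin n) F)).trace ∈ (algebraMap K F).fieldRange)
    (g₀ : G) (lam' : Fin n → K) (hinj : Function.Injective lam')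
    (hdiag : ((σ g₀ : Matrix (Fin n) (Fin n) F))
      = Matrix.diagonal (fun i => algebraMap K F (lam' i)))
    (hsymm : ∀ i j : Fin n, (∃ g, (σ g : Matrix (Fin n) (Fin n) F) i j ≠ 0) →
      ∃ g, (σ g : Matrix (Fin n) (Fin n) F) j i ≠ 0) :
    ∃ d : Fin n → Fˣ, ∀ (g : G) (i j : Fin n),
      (d i : F) * (σ g : Matrix (Fin n) (Fin n) F) i j * ((d j)⁻¹ : Fˣ)
        ∈ (algebraMap K F).fieldRange := by
  classical
  set u : G → Matrix (Fin n) (Fin n) F := fun g => (σ g : Matrix (Fin n) (Fin n) F) with hu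
  set W := Submodule.span K (Set.range u) with hW
  have humul : ∀ g h, u g * u h = u (g * h) := by
    intro g h; show (σ g).val * (σ h).val = (σ (g*h)).val; rw [← Units.val_mul, ← _root_.map_mul]
  have hWmul : ∀ x ∈ W, ∀ y ∈ W, x * y ∈ W := mul_mem_span humul
  have hWtr : ∀ x ∈ W, x.trace ∈ (algebraMap K F).fieldRange := trace_mem_of_mem_span htr
  have huW : ∀ g, u g ∈ W := fun g => Submodule.subset_span ⟨g, rfl⟩
  have hEW : ∀ i, Ediag F i ∈ W := by
    intro i
    rw [Ediag_eq_aeval hinj i, ← hdiag]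
    exact aeval_mem_span (fun k => ⟨g₀ ^ k, by show (σ (g₀^k)).val = ((σ g₀).val)^k; rw [_root_.map_pow, Units.val_pow_eq_pow_val]⟩) _
  -- chains give elements of W
  have hchainW : ∀ {i j : Fin n} {c : F}, MCChain u i j c → ∃ w ∈ W, w i j = c := by
    intro i j c hc
    induction hc with
    | base => exact ⟨Ediag F i, hEW i, by simp [Ediag]⟩
    | @step j' c' hc g k hne ih =>
        obtain ⟨w, hwW, hwv⟩ := ih
        refine ⟨w * (Ediag F j' * u g), hWmul _ hwW _ (hWmul _ (hEW j') _ (huW g)), ?_⟩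
        rw [Matrix.mul_apply, Finset.sum_eq_single j']
        · rw [Ediag_mul, if_pos rfl, hwv]
        · intro b _ hb; rw [Ediag_mul, if_neg hb, mul_zero]
        · simp
  have htrace : ∀ {i j : Fin n} {c : F}, MCChain u i j c → ∀ w ∈ W,
      c * w j i ∈ (algebraMap K F).fieldRange := by
    intro i j c hc w hwW
    obtain ⟨w', hw'W, hw'v⟩ := hchainW hc
    have := hWtr _ (hWmul _ (hWmul _ (hEW i) _ hw'W) _ (hWmul _ (hEW j) _ hwW))
    rwa [trace_Ediag_mul_mul_Ediag_mul, hw'v] at this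
  set Conn : Fin n → Fin n → Prop := fun i j => ∃ c, MCChain u i j c with hConndef
  have hconn_ne : ∀ j : Fin n, (Finset.univ.filter (fun i => Conn i j)).Nonempty :=
    fun j => ⟨j, by simp [hConndef]; exact ⟨1, MCChain.base j⟩⟩
  set rep : Fin n → Fin n := fun j => (Finset.univ.filter (fun i => Conn i j)).min' (hconn_ne j)
    with hrepdef
  have hrep_conn : ∀ j, Conn (rep j) j := by
    intro j
    have := Finset.min'_mem (Finset.univ.filter (fun i => Conn i j)) (hconn_ne j)
    exact (Finset.mem_filter.1 this).2
  have hrep_eq : ∀ i j, Conn i j → rep i = rep j := by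
    intro i j hij
    have hset : Finset.univ.filter (fun k => Conn k i) = Finset.univ.filter (fun k => Conn k j) := by
      ext k
      simp only [Finset.mem_filter, Finset.mem_univ, true_and, hConndef]
      constructor
      · rintro ⟨c, hc⟩; obtain ⟨c', hc'⟩ := hij; exact ⟨c * c', hc.trans hc'⟩
      · rintro ⟨c, hc⟩
        obtain ⟨c', hc'⟩ := hij
        obtain ⟨c'', hc''⟩ := hc'.reverse hsymm
        exact ⟨c * c'', hc.trans hc''⟩
    apply le_antisymm
    · apply Finset.min'_le
      rw [hset]
      exact Finset.min'_mem _ _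
    · apply Finset.min'_le
      rw [← hset]
      exact Finset.min'_mem _ _
  have hd : ∀ j, MCChain u (rep j) j ((hrep_conn j).choose) := fun j => (hrep_conn j).choose_spec
  set d : Fin n → F := fun j => (hrep_conn j).choose with hddef
  have hd0 : ∀ j, d j ≠ 0 := fun j => (hd j).ne_zero
  refine ⟨fun j => Units.mk0 (d j) (hd0 j), ?_⟩
  intro g i j
  rw [show (((Units.mk0 (d j) (hd0 j))⁻¹ : Fˣ) : F) = (d j)⁻¹ by
    rw [Units.val_inv_eq_inv_val, Units.val_mk0]]
  show (d i) * u g i j * (d j)⁻¹ ∈ (algebraMap K F).fieldRange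
  by_cases hf : u g i j = 0
  · rw [hf, mul_zero, zero_mul]; exact zero_mem _
  · have hConn : Conn i j := ⟨1 * u g i j, (MCChain.base i).step g j hf⟩
    have hri : rep i = rep j := hrep_eq _ _ hConn
    obtain ⟨c', hrev⟩ := (hd j).reverse hsymm
    have chain1 : MCChain u (rep j) i (d i) := by rw [← hri]; exact hd i
    have hnum : MCChain u (rep j) (rep j) (d i * u g i j * c') :=
      (chain1.step g j hf).trans hrev
    have hden : MCChain u (rep j) (rep j) (d j * c') := (hd j).trans hrev
    have hnum' : d i * u g i j * c' ∈ (algebraMap K F).fieldRange := by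
      have := htrace hnum (Ediag F (rep j)) (hEW _)
      simpa [Ediag] using this
    have hden' : d j * c' ∈ (algebraMap K F).fieldRange := by
      have := htrace hden (Ediag F (rep j)) (hEW _)
      simpa [Ediag] using this
    have hden0 : d j * c' ≠ 0 := hden.ne_zero
    have hc'0 : c' ≠ 0 := hrev.ne_zero
    have heq : d i * u g i j * (d j)⁻¹ = (d i * u g i j * c') * (d j * c')⁻¹ := by
      have h9 : (d i * u g i j * c') * (d j * c')⁻¹
          = (d i * u g i j) * (d j)⁻¹ * (c' * c'⁻¹) := by
        rw [mul_inv]; ring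
      rw [h9, mul_inv_cancel₀ hc'0, mul_one]
    rw [heq]
    exact mul_mem hnum' (inv_mem hden')
end EngineMain

section Symm
variable {F : Type*} [Field F] {n : ℕ} {G : Type*} [Group G]

lemma symm_of_semisimple (σ : G →* (Matrix (Fin n) (Fin n) F)ˣ)
    {ι : Type*} (S : ι → Submodule F (Fin n → F))
    (hSinv : ∀ t g v, v ∈ S t → ((σ g : Matrix (Fin n) (Fin n) F)).mulVec v ∈ S t)
    (hSsimple : ∀ t (q : Submodule F (Fin n → F)), q ≤ S t →
      (∀ g v, v ∈ q → ((σ g : Matrix (Fin n) (Fin n) F)).mulVec v ∈ q) → q = ⊥ ∨ q = S t)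
    (hSsup : ⨆ t, S t = ⊤)
    (hEinv : ∀ (i : Fin n) t v, v ∈ S t → (Ediag F i).mulVec v ∈ S t)
    (i j : Fin n) (hij : ∀ g, (σ g : Matrix (Fin n) (Fin n) F) i j = 0) (g : G) :
    (σ g : Matrix (Fin n) (Fin n) F) j i = 0 := by
  classical
  set u : G → Matrix (Fin n) (Fin n) F := fun g => (σ g : Matrix (Fin n) (Fin n) F) with hu
  set x := Ediag F j * u g * Ediag F i with hx
  have humul : ∀ a b, u a * u b = u (a * b) := by
    intro a b; show (σ a).val * (σ b).val = (σ (a*b)).val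
    rw [← Units.val_mul, ← _root_.map_mul]
  have hu1 : u 1 = 1 := by show (σ 1).val = 1; rw [_root_.map_one, Units.val_one]
  have hx0 : ∀ a, x * u a * x = 0 := by
    intro a
    have hmid : Ediag F i * u a * Ediag F j = 0 := by
      ext a' b'
      rw [mul_Ediag, Ediag_mul]
      by_cases h1 : b' = j
      · by_cases h2 : a' = i
        · subst h1; subst h2; simpa using hij a
        · simp [h1, h2]
      · simp [h1]
    have hrw : x * u a * x = (Ediag F j * u g) * (Ediag F i * u a * Ediag F j) * (u g * Ediag F i) := by
      rw [hx]; simp only [mul_assoc]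
    rw [hrw, hmid, mul_zero, zero_mul]
  have hxS : ∀ t v, v ∈ S t → x.mulVec v ∈ S t := by
    intro t v hv
    rw [hx, ← Matrix.mulVec_mulVec, ← Matrix.mulVec_mulVec]
    exact hEinv _ _ _ (hSinv _ _ _ (hEinv _ _ _ hv))
  have key : ∀ t v, v ∈ S t → x.mulVec v = 0 := by
    intro t
    set U := Submodule.span F {w | ∃ a, ∃ v ∈ S t, w = (u a).mulVec (x.mulVec v)} with hU
    have hUle : U ≤ S t := by
      rw [hU, Submodule.span_le]
      rintro w ⟨a, v, hv, rfl⟩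
      exact hSinv _ _ _ (hxS _ _ hv)
    have hUinv : ∀ a v, v ∈ U → (u a).mulVec v ∈ U := by
      intro a v hv
      induction hv using Submodule.span_induction with
      | mem w hw =>
          obtain ⟨b, v', hv', rfl⟩ := hw
          rw [Matrix.mulVec_mulVec, humul]
          exact Submodule.subset_span ⟨a * b, v', hv', rfl⟩
      | zero => rw [Matrix.mulVec_zero]; exact zero_mem _
      | add y z _ _ hy hz => rw [Matrix.mulVec_add]; exact add_mem hy hz
      | smul k y _ hy => rw [Matrix.mulVec_smul]; exact Submodule.smul_mem _ _ hy
    rcases hSsimple t U hUle hUinv with hbot | htop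
    · intro v hv
      have : x.mulVec v ∈ U := by
        have h1 : x.mulVec v = (u 1).mulVec (x.mulVec v) := by
          rw [hu1, Matrix.one_mulVec]
        rw [h1]
        exact Submodule.subset_span ⟨1, v, hv, rfl⟩
      rw [hbot] at this
      simpa using this
    · intro v hv
      rw [← htop] at hv
      induction hv using Submodule.span_induction with
      | mem w hw =>
          obtain ⟨b, v', hv', rfl⟩ := hw
          rw [Matrix.mulVec_mulVec, Matrix.mulVec_mulVec, hx0, Matrix.zero_mulVec]
      | zero => rw [Matrix.mulVec_zero]
      | add y z _ _ hy hz => rw [Matrix.mulVec_add, hy, hz, add_zero]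
      | smul k y _ hy => rw [Matrix.mulVec_smul, hy, smul_zero]
  have hall : ∀ v : Fin n → F, x.mulVec v = 0 := by
    have hle : (⨆ t, S t) ≤ LinearMap.ker x.mulVecLin := by
      apply iSup_le
      intro t v hv
      rw [LinearMap.mem_ker, Matrix.mulVecLin_apply]
      exact key t v hv
    intro v
    have hv : v ∈ LinearMap.ker x.mulVecLin := hle (by rw [hSsup]; exact Submodule.mem_top)
    rw [LinearMap.mem_ker, Matrix.mulVecLin_apply] at hv
    exact hv
  have hxji : x j i = u g j i := by
    rw [hx, mul_Ediag, if_pos rfl, Ediag_mul, if_pos rfl]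
  have h2 : x.mulVec (Pi.single i 1) j = x j i := by
    rw [Matrix.mulVec, dotProduct]
    rw [Finset.sum_eq_single i]
    · simp
    · intro b _ hb; simp [Pi.single_eq_of_ne hb]
    · simp
  have h3 := hall (Pi.single i 1)
  show u g j i = 0
  rw [← hxji, ← h2, h3]
  simp
end Symm

section Blocks
variable {F : Type*} [Field F] {n : ℕ} {G : Type*} [Group G]

lemma sum_mulVec_aux {ι : Type*} (s : Finset ι) (A : ι → Matrix (Fin n) (Fin n) F)
    (v : Fin n → F) : (∑ k ∈ s, A k).mulVec v = ∑ k ∈ s, (A k).mulVec v := by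
  classical
  induction s using Finset.induction_on with
  | empty => simp [Matrix.zero_mulVec]
  | insert _ _ h ih =>
      rw [Finset.sum_insert h, Finset.sum_insert h, Matrix.add_mulVec, ih]

lemma blocks_give_submodules
    (σ : G →* (Matrix (Fin n) (Fin n) F)ˣ)
    {r : ℕ} {m : Fin r → ℕ}
    (ρi : (i : Fin r) → G →* (Matrix (Fin (m i)) (Fin (m i)) F)ˣ)
    (e : (Σ i : Fin r, Fin (m i)) ≃ Fin n)
    (M : (Matrix (Fin n) (Fin n) F)ˣ)
    (hirr : ∀ i, ∀ p : Submodule F (Fin (m i) → F),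
       (∀ (g : G) v, v ∈ p → ((ρi i g : Matrix (Fin (m i)) (Fin (m i)) F)).mulVec v ∈ p) →
         p = ⊥ ∨ p = ⊤)
    (hdec : ∀ g, ((σ g : Matrix (Fin n) (Fin n) F)) =
       (M : Matrix (Fin n) (Fin n) F) *
         (Matrix.reindex e e (Matrix.blockDiagonal' fun i =>
           ((ρi i g : Matrix (Fin (m i)) (Fin (m i)) F)))) *
         ((M⁻¹ : (Matrix (Fin n) (Fin n) F)ˣ) : Matrix (Fin n) (Fin n) F)) :
    ∃ S : Fin r → Submodule F (Fin n → F),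
      (∀ t (g : G) v, v ∈ S t → ((σ g : Matrix (Fin n) (Fin n) F)).mulVec v ∈ S t) ∧
      (∀ t (q : Submodule F (Fin n → F)), q ≤ S t →
        (∀ (g : G) v, v ∈ q → ((σ g : Matrix (Fin n) (Fin n) F)).mulVec v ∈ q) →
          q = ⊥ ∨ q = S t) ∧
      (⨆ t, S t = ⊤) := by
  classical
  set B : G → Matrix (Fin n) (Fin n) F := fun g =>
    Matrix.reindex e e (Matrix.blockDiagonal' fun i =>
      ((ρi i g : Matrix (Fin (m i)) (Fin (m i)) F))) with hBdef
  have hBentry : ∀ g (p q : Σ i : Fin r, Fin (m i)), B g (e p) (e q)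
      = Matrix.blockDiagonal' (fun i => ((ρi i g : Matrix (Fin (m i)) (Fin (m i)) F))) p q := by
    intro g p q
    simp [hBdef, Matrix.reindex_apply, Matrix.submatrix_apply]
  have hB : ∀ g (v : Fin n → F) (t : Fin r) (s : Fin (m t)),
      ((B g).mulVec v) (e ⟨t, s⟩)
        = ∑ s', ((ρi t g : Matrix (Fin (m t)) (Fin (m t)) F)) s s' * v (e ⟨t, s'⟩) := by
    intro g v t s
    rw [Matrix.mulVec, dotProduct]
    rw [← Equiv.sum_comp e (fun jj => B g (e ⟨t, s⟩) jj * v jj)]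
    rw [← Finset.univ_sigma_univ, Finset.sum_sigma]
    rw [Finset.sum_eq_single t]
    · apply Finset.sum_congr rfl
      intro s' _
      rw [hBentry, Matrix.blockDiagonal'_apply_eq]
    · intro t' _ ht'
      apply Finset.sum_eq_zero
      intro s' _
      rw [hBentry, Matrix.blockDiagonal'_apply_ne _ _ _ (Ne.symm ht'), zero_mul]
    · simp
  -- the coordinate-block submodules
  set C : Fin r → Submodule F (Fin n → F) := fun t =>
    { carrier := {v | ∀ p : Σ i : Fin r, Fin (m i), p.1 ≠ t → v (e p) = 0}
      add_mem' := fun {a b} ha hb p hp => by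
        simp only [Pi.add_apply, ha p hp, hb p hp, add_zero]
      zero_mem' := fun p hp => rfl
      smul_mem' := fun c v hv p hp => by
        simp only [Pi.smul_apply, hv p hp, smul_zero] } with hCdef
  have hCmem : ∀ t (v : Fin n → F), v ∈ C t ↔
      ∀ p : Σ i : Fin r, Fin (m i), p.1 ≠ t → v (e p) = 0 := fun t v => Iff.rfl
  -- embedding of a block
  set emb : (t : Fin r) → (Fin (m t) → F) → (Fin n → F) := fun t u =>
    (fun idx => ∑ s, (if idx = e ⟨t, s⟩ then u s else 0)) with hembdef
  have hemb1 : ∀ t (u : Fin (m t) → F) (s : Fin (m t)), emb t u (e ⟨t, s⟩) = u s := by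
    intro t u s
    rw [hembdef]
    simp only
    rw [Finset.sum_eq_single s]
    · simp
    · intro s' _ hs'
      rw [if_neg]
      intro h
      have h2 : (⟨t, s⟩ : Σ i : Fin r, Fin (m i)) = ⟨t, s'⟩ := e.injective h
      have h3 : s = s' := by simpa using h2
      exact hs' h3.symm
    · simp
  have hemb2 : ∀ t (u : Fin (m t) → F) (p : Σ i : Fin r, Fin (m i)), p.1 ≠ t →
      emb t u (e p) = 0 := by
    intro t u p hp
    rw [hembdef]
    simp only
    apply Finset.sum_eq_zero
    intro s' _
    rw [if_neg]
    intro h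
    have h2 : p = ⟨t, s'⟩ := e.injective h
    exact hp (by rw [h2])
  have hembC : ∀ t (u : Fin (m t) → F), emb t u ∈ C t := by
    intro t u p hp
    exact hemb2 t u p hp
  have hembeq : ∀ t (v : Fin n → F), v ∈ C t → v = emb t (fun s => v (e ⟨t, s⟩)) := by
    intro t v hv
    funext idx
    obtain ⟨p, rfl⟩ : ∃ p, e p = idx := ⟨e.symm idx, e.apply_symm_apply idx⟩
    obtain ⟨t', s'⟩ := p
    by_cases ht' : t' = t
    · subst ht'
      rw [hemb1]
    · rw [hemb2 t _ ⟨t', s'⟩ ht', hv ⟨t', s'⟩ ht']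
  -- emb as a linear map
  have hembadd : ∀ t (u u' : Fin (m t) → F), emb t (u + u') = emb t u + emb t u' := by
    intro t u u'
    funext idx
    rw [hembdef]
    simp only [Pi.add_apply, ← Finset.sum_add_distrib]
    apply Finset.sum_congr rfl
    intro s' _
    by_cases h : idx = e ⟨t, s'⟩ <;> simp [h]
  have hembsmul : ∀ t (c : F) (u : Fin (m t) → F), emb t (c • u) = c • emb t u := by
    intro t c u
    funext idx
    rw [hembdef]
    simp only [Pi.smul_apply, Finset.smul_sum]
    apply Finset.sum_congr rfl
    intro s' _
    by_cases h : idx = e ⟨t, s'⟩ <;> simp [h]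
  -- intertwining
  have hBemb : ∀ (g : G) t (u : Fin (m t) → F),
      (B g).mulVec (emb t u)
        = emb t (((ρi t g : Matrix (Fin (m t)) (Fin (m t)) F)).mulVec u) := by
    intro g t u
    funext idx
    obtain ⟨p, rfl⟩ : ∃ p, e p = idx := ⟨e.symm idx, e.apply_symm_apply idx⟩
    obtain ⟨t', s'⟩ := p
    by_cases ht' : t' = t
    · subst ht'
      rw [hB, hemb1]
      rw [Matrix.mulVec, dotProduct]
      apply Finset.sum_congr rfl
      intro s'' _
      rw [hemb1]
    · rw [hemb2 t _ ⟨t', s'⟩ ht']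
      rw [hB]
      apply Finset.sum_eq_zero
      intro s'' _
      rw [hemb2 t _ ⟨t', s''⟩ ht', mul_zero]
  -- the submodules S t
  set S : Fin r → Submodule F (Fin n → F) := fun t =>
    (C t).map (Matrix.mulVecLin (M : Matrix (Fin n) (Fin n) F)) with hSdef
  have hMB : ∀ g : G, (σ g : Matrix (Fin n) (Fin n) F) * (M : Matrix (Fin n) (Fin n) F)
      = (M : Matrix (Fin n) (Fin n) F) * B g := by
    intro g
    rw [hdec g, mul_assoc, Units.inv_mul, mul_one]
  have hCBinv : ∀ t (g : G) v, v ∈ C t → (B g).mulVec v ∈ C t := by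
    intro t g v hv p hp
    obtain ⟨t', s'⟩ := p
    rw [hB]
    apply Finset.sum_eq_zero
    intro s'' _
    rw [hv ⟨t', s''⟩ hp, mul_zero]
  have hSmem : ∀ t (v : Fin n → F), v ∈ S t ↔
      ∃ w ∈ C t, (M : Matrix (Fin n) (Fin n) F).mulVec w = v := by
    intro t v
    rw [hSdef]
    simp only [Submodule.mem_map, Matrix.mulVecLin_apply]
  have hSinv : ∀ t (g : G) v, v ∈ S t →
      ((σ g : Matrix (Fin n) (Fin n) F)).mulVec v ∈ S t := by
    intro t g v hv
    obtain ⟨w, hw, rfl⟩ := (hSmem t v).1 hv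
    rw [Matrix.mulVec_mulVec, hMB, ← Matrix.mulVec_mulVec]
    exact (hSmem t _).2 ⟨(B g).mulVec w, hCBinv t g w hw, rfl⟩
  have hSsimple : ∀ t (q : Submodule F (Fin n → F)), q ≤ S t →
      (∀ (g : G) v, v ∈ q → ((σ g : Matrix (Fin n) (Fin n) F)).mulVec v ∈ q) →
        q = ⊥ ∨ q = S t := by
    intro t q hqle hqinv
    set embL : (Fin (m t) → F) →ₗ[F] (Fin n → F) :=
      { toFun := fun u => (M : Matrix (Fin n) (Fin n) F).mulVec (emb t u)
        map_add' := fun u u' => by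
          show (M : Matrix (Fin n) (Fin n) F).mulVec (emb t (u + u'))
            = (M : Matrix (Fin n) (Fin n) F).mulVec (emb t u)
              + (M : Matrix (Fin n) (Fin n) F).mulVec (emb t u')
          rw [hembadd, Matrix.mulVec_add]
        map_smul' := fun c u => by
          show (M : Matrix (Fin n) (Fin n) F).mulVec (emb t (c • u))
            = c • (M : Matrix (Fin n) (Fin n) F).mulVec (emb t u)
          rw [hembsmul, Matrix.mulVec_smul] } with hembL
    set q' : Submodule F (Fin (m t) → F) := q.comap embL with hq'
    have hq'mem : ∀ u, u ∈ q' ↔ (M : Matrix (Fin n) (Fin n) F).mulVec (emb t u) ∈ q :=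
      fun u => Iff.rfl
    have hq'inv : ∀ (g : G) u, u ∈ q' →
        ((ρi t g : Matrix (Fin (m t)) (Fin (m t)) F)).mulVec u ∈ q' := by
      intro g u hu
      rw [hq'mem, ← hBemb, Matrix.mulVec_mulVec, ← hMB, ← Matrix.mulVec_mulVec]
      exact hqinv g _ ((hq'mem u).1 hu)
    rcases hirr t q' hq'inv with hbot | htop
    · left
      rw [Submodule.eq_bot_iff]
      intro v hv
      obtain ⟨w, hw, rfl⟩ := (hSmem t v).1 (hqle hv)
      have hwemb := hembeq t w hw
      have : (fun s => w (e ⟨t, s⟩)) ∈ q' := by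
        rw [hq'mem, ← hwemb]
        exact hv
      rw [hbot, Submodule.mem_bot] at this
      rw [hwemb, this]
      have : emb t (0 : Fin (m t) → F) = 0 := by
        funext idx
        rw [hembdef]
        simp
      rw [this, Matrix.mulVec_zero]
    · right
      refine le_antisymm hqle ?_
      intro v hv
      obtain ⟨w, hw, rfl⟩ := (hSmem t v).1 hv
      have hwemb := hembeq t w hw
      have hmem : (fun s => w (e ⟨t, s⟩)) ∈ q' := by rw [htop]; trivial
      rw [hq'mem, ← hwemb] at hmem
      exact hmem
  have hSsup : ⨆ t, S t = ⊤ := by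
    rw [eq_top_iff]
    intro v _
    set w : Fin n → F := ((M⁻¹ : (Matrix (Fin n) (Fin n) F)ˣ) :
      Matrix (Fin n) (Fin n) F).mulVec v with hwdef
    have hv : v = (M : Matrix (Fin n) (Fin n) F).mulVec w := by
      rw [hwdef, Matrix.mulVec_mulVec, Units.mul_inv, Matrix.one_mulVec]
    have hw : w = ∑ t, emb t (fun s => w (e ⟨t, s⟩)) := by
      funext idx
      obtain ⟨p, rfl⟩ : ∃ p, e p = idx := ⟨e.symm idx, e.apply_symm_apply idx⟩
      obtain ⟨t', s'⟩ := p
      rw [Finset.sum_apply]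
      rw [Finset.sum_eq_single t']
      · rw [hemb1]
      · intro t'' _ ht''
        exact hemb2 t'' _ ⟨t', s'⟩ (Ne.symm ht'')
      · simp
    rw [hv, hw, ← Matrix.mulVecLin_apply, map_sum]
    apply Submodule.sum_mem
    intro t _
    apply Submodule.mem_iSup_of_mem t
    rw [Matrix.mulVecLin_apply]
    exact (hSmem t _).2 ⟨_, hembC t _, rfl⟩
  exact ⟨S, hSinv, hSsimple, hSsup⟩
end Blocks


/-- **Lemma (a semisimple representation with `K`-rational traces and a regular `K`-rational
element is defined over `K`).**  Here semisimplicity of `ρ : G → GLₙ(K̄)` is expressed by the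
existence of a decomposition of `ρ`, up to conjugation, into a direct (block diagonal) sum of
irreducible representations. -/
theorem semisimple_defined_over_base
    {G : Type*} [Group G] {K : Type*} [Field K] [CharZero K] {n : ℕ}
    (ρ : G →* Matrix.GeneralLinearGroup (Fin n) (AlgebraicClosure K))
    (hss : ∃ (r : ℕ) (m : Fin r → ℕ)
      (ρi : (i : Fin r) → G →* Matrix.GeneralLinearGroup (Fin (m i)) (AlgebraicClosure K))
      (e : (Σ i : Fin r, Fin (m i)) ≃ Fin n)
      (M : Matrix.GeneralLinearGroup (Fin n) (AlgebraicClosure K)),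
      (∀ i, MatRep.IsIrreducible (ρi i)) ∧
      ∀ g : G,
        (ρ g : Matrix (Fin n) (Fin n) (AlgebraicClosure K)) =
          (M : Matrix (Fin n) (Fin n) (AlgebraicClosure K)) *
            (Matrix.reindex e e
              (Matrix.blockDiagonal' fun i =>
                ((ρi i g : Matrix (Fin (m i)) (Fin (m i)) (AlgebraicClosure K))))) *
            ((M⁻¹ : Matrix.GeneralLinearGroup (Fin n) (AlgebraicClosure K)) :
              Matrix (Fin n) (Fin n) (AlgebraicClosure K)))
    (hfin : ∃ E : IntermediateField K (AlgebraicClosure K),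
      FiniteDimensional K E ∧ MatRep.IsDefinedOver ρ E.toSubfield)
    (htr : ∀ g : G,
      (ρ g : Matrix (Fin n) (Fin n) (AlgebraicClosure K)).trace ∈
        (algebraMap K (AlgebraicClosure K)).fieldRange)
    (g₀ : G)
    (hg₀ : ∃ roots : Fin n → AlgebraicClosure K, Function.Injective roots ∧
      (∀ i, roots i ∈ (algebraMap K (AlgebraicClosure K)).fieldRange) ∧
      (ρ g₀ : Matrix (Fin n) (Fin n) (AlgebraicClosure K)).charpoly =
        ∏ i, (X - C (roots i))) :
    MatRep.IsDefinedOver ρ ((algebraMap K (AlgebraicClosure K)).fieldRange) := by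
  classical
  set F := AlgebraicClosure K with hF
  by_cases hn0 : n = 0
  · subst hn0
    exact ⟨1, fun g i j => i.elim0⟩
  have hn : 0 < n := Nat.pos_of_ne_zero hn0
  obtain ⟨r, m, ρi, e, M, hirr, hdecomp⟩ := hss
  obtain ⟨roots, hinj, hroots, hcp⟩ := hg₀
  choose lam' hlam' using hroots
  have hinj' : Function.Injective lam' := by
    intro a b hab
    apply hinj
    rw [← hlam' a, ← hlam' b, hab]
  obtain ⟨P, hP⟩ := exists_diag hn ((ρ g₀ : Matrix (Fin n) (Fin n) F)) roots hinj hcp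
  -- the conjugated representation
  set σ : G →* (Matrix (Fin n) (Fin n) F)ˣ :=
    ((MulAut.conj P⁻¹).toMonoidHom).comp ρ with hσ
  have hσval : ∀ g, (σ g : Matrix (Fin n) (Fin n) F)
      = (↑P⁻¹ : Matrix (Fin n) (Fin n) F) * (ρ g : Matrix (Fin n) (Fin n) F)
        * (↑P : Matrix (Fin n) (Fin n) F) := by
    intro g
    show ((P⁻¹ * ρ g * (P⁻¹)⁻¹ : (Matrix (Fin n) (Fin n) F)ˣ) : Matrix (Fin n) (Fin n) F) = _
    rw [inv_inv]
    rw [Units.val_mul, Units.val_mul]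
  have hdiagσ : (σ g₀ : Matrix (Fin n) (Fin n) F)
      = Matrix.diagonal (fun i => algebraMap K F (lam' i)) := by
    have hre : roots = fun i => algebraMap K F (lam' i) := funext fun i => (hlam' i).symm
    rw [hσval, hP, hre]
  have htrσ : ∀ g, ((σ g : Matrix (Fin n) (Fin n) F)).trace
      ∈ (algebraMap K F).fieldRange := by
    intro g
    rw [hσval, Matrix.trace_mul_cycle, Units.mul_inv, one_mul]
    exact htr g
  have hdecσ : ∀ g, ((σ g : Matrix (Fin n) (Fin n) F)) =
      ((P⁻¹ * M : (Matrix (Fin n) (Fin n) F)ˣ) : Matrix (Fin n) (Fin n) F) *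
        (Matrix.reindex e e (Matrix.blockDiagonal' fun i =>
          ((ρi i g : Matrix (Fin (m i)) (Fin (m i)) F)))) *
        (((P⁻¹ * M)⁻¹ : (Matrix (Fin n) (Fin n) F)ˣ) : Matrix (Fin n) (Fin n) F) := by
    intro g
    rw [hσval, hdecomp g, _root_.mul_inv_rev, inv_inv]
    simp only [Units.val_mul, mul_assoc]
  obtain ⟨S, hSinv, hSsimple, hSsup⟩ :=
    blocks_give_submodules σ ρi e (P⁻¹ * M) (fun i => (hirr i).2) hdecσ
  have hpowσ : ∀ k : ℕ, ((σ g₀ : Matrix (Fin n) (Fin n) F)) ^ k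
      = ((σ (g₀ ^ k) : Matrix (Fin n) (Fin n) F)) := by
    intro k
    rw [_root_.map_pow, Units.val_pow_eq_pow_val]
  have hEinv : ∀ (i : Fin n) t v, v ∈ S t → (Ediag F i).mulVec v ∈ S t := by
    intro i t v hv
    rw [Ediag_eq_aeval hinj' i, ← hdiagσ, Polynomial.aeval_eq_sum_range, sum_mulVec_aux]
    apply Submodule.sum_mem
    intro k _
    rw [Matrix.smul_mulVec, ← algebraMap_smul F ((Lagrange.basis Finset.univ lam' i).coeff k)]
    apply Submodule.smul_mem
    rw [hpowσ k]
    exact hSinv t (g₀ ^ k) v hv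
  have hsymm : ∀ i j : Fin n, (∃ g, (σ g : Matrix (Fin n) (Fin n) F) i j ≠ 0) →
      ∃ g, (σ g : Matrix (Fin n) (Fin n) F) j i ≠ 0 := by
    intro i j ⟨g, hg⟩
    by_contra h
    push_neg at h
    exact hg (symm_of_semisimple σ S hSinv hSsimple hSsup hEinv j i h g)
  obtain ⟨d, hd⟩ := engine σ htrσ g₀ lam' hinj' hdiagσ hsymm
  -- the final conjugating matrix
  set Du : (Matrix (Fin n) (Fin n) F)ˣ :=
    ⟨Matrix.diagonal (fun i => (d i : F)),
     Matrix.diagonal (fun i => (((d i)⁻¹ : Fˣ) : F)),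
     by rw [Matrix.diagonal_mul_diagonal]
        have h7 : (fun i => ((d i : F)) * (((d i)⁻¹ : Fˣ) : F)) = fun _ => (1 : F) :=
          funext fun i => Units.mul_inv _
        rw [h7, Matrix.diagonal_one],
     by rw [Matrix.diagonal_mul_diagonal]
        have h7 : (fun i => (((d i)⁻¹ : Fˣ) : F) * ((d i : F))) = fun _ => (1 : F) :=
          funext fun i => Units.inv_mul _
        rw [h7, Matrix.diagonal_one]⟩ with hDu
  refine ⟨Du * P⁻¹, ?_⟩
  intro g i j
  have hval : ((Du * P⁻¹ * ρ g * (Du * P⁻¹)⁻¹ :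
      (Matrix (Fin n) (Fin n) F)ˣ) : Matrix (Fin n) (Fin n) F)
      = (Du : Matrix (Fin n) (Fin n) F) * (σ g : Matrix (Fin n) (Fin n) F)
        * ((Du⁻¹ : (Matrix (Fin n) (Fin n) F)ˣ) : Matrix (Fin n) (Fin n) F) := by
    rw [hσval, _root_.mul_inv_rev, inv_inv]
    simp only [Units.val_mul, mul_assoc]
  rw [hval]
  have hentry : ((Du : Matrix (Fin n) (Fin n) F) * (σ g : Matrix (Fin n) (Fin n) F)
      * ((Du⁻¹ : (Matrix (Fin n) (Fin n) F)ˣ) : Matrix (Fin n) (Fin n) F)) i j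
      = (d i : F) * (σ g : Matrix (Fin n) (Fin n) F) i j * ((d j)⁻¹ : Fˣ) := by
    have h1 : ((Du⁻¹ : (Matrix (Fin n) (Fin n) F)ˣ) : Matrix (Fin n) (Fin n) F)
        = Matrix.diagonal (fun i => (((d i)⁻¹ : Fˣ) : F)) := rfl
    rw [h1]
    rw [Matrix.mul_diagonal]
    have h2 : ((Du : Matrix (Fin n) (Fin n) F) * (σ g : Matrix (Fin n) (Fin n) F)) i j
        = (d i : F) * (σ g : Matrix (Fin n) (Fin n) F) i j := by
      have : (Du : Matrix (Fin n) (Fin n) F) = Matrix.diagonal (fun i => (d i : F)) := rfl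
      rw [this, Matrix.diagonal_mul]
    rw [h2]
  rw [hentry]
  exact hd g i j
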